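/- Backward exit time bound: let T > 0, g > 0, E_e, B_e ∈ ℝ, and let E, B : ℝ×ℝ³ → ℝ³ be continuously differentiable with sup over [0,T]×Ω̄ of (|E| + |B| + |∂_{t,x}E| + |∂_{t,x}B|) finite. Let c₀ > 0 and assume the interior sign condition g − E_e − E₃(t,x) − (v̂ × B(t,x))₃ ≥ c₀ for all t ∈ [0,T], x ∈ Ω̄, v ∈ ℝ³. Then there exists a constant C > 0, depending only on T, g, |E_e|, |B_e|, c₀ and the above supremum of the fields and their first derivatives, with the following property: if (t,x,v) ∈ (0,T)×Ω×ℝ³, X, V : ℝ → ℝ³ are differentiable with X′(τ) = V(τ)/⟨V(τ)⟩, V′(τ) = 𝔉(τ,X(τ),V(τ)), X(t) = x, V(t) = v, and t_b ∈ (0,t] satisfies X₃(τ) > 0 for all τ ∈ (t−t_b, t) and X₃(t−t_b) = 0, then t_b ≤ (C/c₀) · ( sup_{t−t_b ≤ s ≤ t} ⟨V(s)⟩ ) · V₃(t−t_b)/⟨V(t−t_b)⟩. -/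

import Mathlib

open MeasureTheory Set Topology Filter

noncomputable section

/-- Physical space `ℝ³`, realized as functions `Fin 3 → ℝ`. -/
abbrev V3 : Type := Fin 3 → ℝ

/-- Euclidean inner product on `ℝ³`. -/
def dot3 (a b : V3) : ℝ := a 0 * b 0 + a 1 * b 1 + a 2 * b 2

/-- Euclidean norm on `ℝ³`. -/
def enorm3 (a : V3) : ℝ := Real.sqrt (dot3 a a)

/-- Cross product on `ℝ³`. -/
def cross3 (a b : V3) : V3 :=
  ![a 1 * b 2 - a 2 * b 1, a 2 * b 0 - a 0 * b 2, a 0 * b 1 - a 1 * b 0]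

/-- `⟨v⟩ = √(1 + |v|²)`. -/
def jap (v : V3) : ℝ := Real.sqrt (1 + dot3 v v)

/-- Relativistic velocity `v̂ = v / ⟨v⟩`. -/
def vhat (v : V3) : V3 := (jap v)⁻¹ • v

/-- The open upper half space `Ω = {x ∈ ℝ³ : x₃ > 0}`. -/
def halfSpace : Set V3 := {x : V3 | 0 < x 2}

/-- Embedding of the boundary `∂Ω ≃ ℝ²` into `ℝ³`. -/
def bdryPt (y : ℝ × ℝ) : V3 := ![y.1, y.2, 0]

/-- Projection `(x₁,x₂,x₃) ↦ (x₁,x₂,0)` onto the boundary. -/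
def proj0 (x : V3) : V3 := ![x 0, x 1, 0]

/-- Reflection `x̄ = (x₁,x₂,−x₃)`. -/
def refl3 (x : V3) : V3 := ![x 0, x 1, -(x 2)]

/-- Time derivative `∂ₜ` of a space-time function. -/
def pdt (f : ℝ × V3 → ℝ) : ℝ × V3 → ℝ := fun q => fderiv ℝ f q (1, 0)

/-- Spatial partial derivative `∂_{xᵢ}` of a space-time function. -/
def pdx (i : Fin 3) (f : ℝ × V3 → ℝ) : ℝ × V3 → ℝ := fun q => fderiv ℝ f q (0, Pi.single i 1)

/-- Partial derivative `∂_{xᵢ}` of a function on `ℝ³`. -/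
def sdx (i : Fin 3) (u : V3 → ℝ) : V3 → ℝ := fun x => fderiv ℝ u x (Pi.single i 1)

/-- `i`-th component of a space-time vector field. -/
def comp3 (F : ℝ × V3 → V3) (i : Fin 3) : ℝ × V3 → ℝ := fun q => F q i

/-- Spatial divergence of a space-time vector field. -/
def divX (F : ℝ × V3 → V3) (q : ℝ × V3) : ℝ := ∑ i : Fin 3, pdx i (comp3 F i) q

/-- Spatial curl of a space-time vector field. -/
def curlX (F : ℝ × V3 → V3) (q : ℝ × V3) : V3 :=
  ![pdx 1 (comp3 F 2) q - pdx 2 (comp3 F 1) q,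
    pdx 2 (comp3 F 0) q - pdx 0 (comp3 F 2) q,
    pdx 0 (comp3 F 1) q - pdx 1 (comp3 F 0) q]

/-- Curl of a vector field on `ℝ³`. -/
def curlS (F : V3 → V3) (x : V3) : V3 :=
  ![sdx 1 (fun z => F z 2) x - sdx 2 (fun z => F z 1) x,
    sdx 2 (fun z => F z 0) x - sdx 0 (fun z => F z 2) x,
    sdx 0 (fun z => F z 1) x - sdx 1 (fun z => F z 0) x]

/-- Divergence of a vector field on `ℝ³`. -/
def divS (F : V3 → V3) (x : V3) : ℝ := ∑ i : Fin 3, sdx i (fun z => F z i) x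

/-- Spatial Laplacian of a space-time function. -/
def lapST (f : ℝ × V3 → ℝ) (q : ℝ × V3) : ℝ := ∑ i : Fin 3, pdx i (pdx i f) q

/-- Laplacian of a function on `ℝ³`. -/
def lapS (u : V3 → ℝ) (x : V3) : ℝ := ∑ i : Fin 3, sdx i (sdx i u) x

/-- Open space-time domain `(0,T) × Ω`. -/
def stDom (T : ℝ) : Set (ℝ × V3) := Ioo (0 : ℝ) T ×ˢ halfSpace

/-- Closed space-time domain `[0,T] × Ω̄`. -/
def stDomCl (T : ℝ) : Set (ℝ × V3) := Icc (0 : ℝ) T ×ˢ closure halfSpace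

/-- Lateral boundary domain `(0,T) × ∂Ω`, with `∂Ω ≃ ℝ²`. -/
def bDom (T : ℝ) : Set (ℝ × (ℝ × ℝ)) := Ioo (0 : ℝ) T ×ˢ (univ : Set (ℝ × ℝ))

/-- The third standard basis vector `e₃`. -/
def e3v : V3 := ![0, 0, 1]

/-- The Lorentz force `𝔉(t,x,v) = E + E_e e₃ + v̂ × (B + B_e e₃) − g e₃`. -/
def lorentz (E B : ℝ × V3 → V3) (Ee Be g : ℝ) (t : ℝ) (x v : V3) : V3 :=
  E (t, x) + Ee • e3v + cross3 (vhat v) (B (t, x) + Be • e3v) - g • e3v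

/-- The kinetic weight
`α(t,x,v) = √( x₃² + v̂₃² + 2(g − E_e − E₃(t,x₁,x₂,0) − (v̂ × B(t,x₁,x₂,0))₃) x₃/⟨v⟩ )`. -/
def kinWeight (E B : ℝ × V3 → V3) (Ee g : ℝ) (t : ℝ) (x v : V3) : ℝ :=
  Real.sqrt ((x 2) ^ 2 + (vhat v 2) ^ 2
    + 2 * (g - Ee - E (t, proj0 x) 2 - cross3 (vhat v) (B (t, proj0 x)) 2) * x 2 / jap v)


/-! ### Auxiliary lemmas -/

lemma dot3_self_nonneg (w : V3) : 0 ≤ dot3 w w := by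
  unfold dot3
  nlinarith [mul_self_nonneg (w 0), mul_self_nonneg (w 1), mul_self_nonneg (w 2)]

lemma one_le_jap (w : V3) : 1 ≤ jap w := by
  unfold jap
  have h : Real.sqrt 1 ≤ Real.sqrt (1 + dot3 w w) :=
    Real.sqrt_le_sqrt (by linarith [dot3_self_nonneg w])
  rwa [Real.sqrt_one] at h

lemma jap_pos (w : V3) : 0 < jap w := lt_of_lt_of_le one_pos (one_le_jap w)

lemma sq_comp_le (w : V3) (i : Fin 3) : w i * w i ≤ dot3 w w := by
  have h3 : i = 0 ∨ i = 1 ∨ i = 2 := by fin_cases i <;> simp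
  rcases h3 with rfl | rfl | rfl <;> unfold dot3 <;>
    nlinarith [mul_self_nonneg (w 0), mul_self_nonneg (w 1), mul_self_nonneg (w 2)]

lemma abs_comp_le_enorm3 (w : V3) (i : Fin 3) : |w i| ≤ enorm3 w := by
  unfold enorm3
  rw [← Real.sqrt_mul_self_eq_abs]
  exact Real.sqrt_le_sqrt (sq_comp_le w i)

lemma abs_comp_le_jap (w : V3) (i : Fin 3) : |w i| ≤ jap w := by
  unfold jap
  rw [← Real.sqrt_mul_self_eq_abs]
  exact Real.sqrt_le_sqrt (by linarith [sq_comp_le w i])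

lemma enorm3_nonneg (w : V3) : 0 ≤ enorm3 w := Real.sqrt_nonneg _

lemma vhat_apply (w : V3) (i : Fin 3) : vhat w i = w i / jap w := by
  simp [vhat, div_eq_inv_mul]

lemma abs_vhat_le_one (w : V3) (i : Fin 3) : |vhat w i| ≤ 1 := by
  rw [vhat_apply, abs_div, abs_of_pos (jap_pos w), div_le_one (jap_pos w)]
  exact abs_comp_le_jap w i

lemma mem_closure_halfSpace {x : V3} (hx : 0 ≤ x 2) : x ∈ closure halfSpace := by
  rw [Metric.mem_closure_iff]
  intro ε hε
  refine ⟨Function.update x 2 (x 2 + ε / 2), ?_, ?_⟩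
  · show (0:ℝ) < Function.update x 2 (x 2 + ε / 2) 2
    rw [Function.update_self]
    linarith
  · have hle : dist x (Function.update x 2 (x 2 + ε / 2)) ≤ ε / 2 := by
      rw [dist_pi_le_iff (by linarith)]
      intro i
      rcases eq_or_ne i 2 with rfl | h
      · rw [Function.update_self, Real.dist_eq,
          show x 2 - (x 2 + ε / 2) = -(ε / 2) by ring, abs_neg,
          abs_of_nonneg (by linarith)]
      · rw [Function.update_of_ne h, dist_self]
        linarith
    linarith

set_option maxHeartbeats 1000000

/-- backward exit time bound; the constant `C` depends only on `T`, `g`,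
`|E_e|`, `|B_e|`, `c₀` and the bound `M` on the fields and their first derivatives. -/
theorem backward_exit_time_bound
    (T g Ee Be c0 M : ℝ) (hT : 0 < T) (hg : 0 < g) (hc0 : 0 < c0) :
    ∃ C : ℝ, 0 < C ∧
      ∀ E B : ℝ × V3 → V3,
        ContDiff ℝ 1 E → ContDiff ℝ 1 B →
        (∀ q ∈ stDomCl T,
          enorm3 (E q) + enorm3 (B q) + ‖fderiv ℝ E q‖ + ‖fderiv ℝ B q‖ ≤ M) →
        (∀ t ∈ Icc (0 : ℝ) T, ∀ x ∈ closure halfSpace, ∀ v : V3,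
          c0 ≤ g - Ee - E (t, x) 2 - cross3 (vhat v) (B (t, x)) 2) →
        ∀ (t : ℝ) (x v : V3) (X V : ℝ → V3) (tb : ℝ),
          t ∈ Ioo (0 : ℝ) T → x ∈ halfSpace →
          (∀ τ : ℝ, HasDerivAt X (vhat (V τ)) τ) →
          (∀ τ : ℝ, HasDerivAt V (lorentz E B Ee Be g τ (X τ) (V τ)) τ) →
          X t = x → V t = v → 0 < tb → tb ≤ t →
          (∀ τ ∈ Ioo (t - tb) t, 0 < X τ 2) → X (t - tb) 2 = 0 →
          tb ≤ C / c0 * sSup ((fun s => jap (V s)) '' Icc (t - tb) t)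
              * (V (t - tb) 2 / jap (V (t - tb))) := by
  set K1 : ℝ := |M| + |Ee| + 2 * (|M| + |Be|) + g with hK1def
  clear_value K1
  have hK1 : 0 < K1 := by
    rw [hK1def]
    linarith only [abs_nonneg M, abs_nonneg Ee, abs_nonneg Be, hg]
  set K : ℝ := 3 * K1 with hKdef
  clear_value K
  have hK : 0 < K := by rw [hKdef]; linarith only [hK1]
  have hKT : 0 ≤ K * T := mul_nonneg hK.le hT.le
  refine ⟨2 * (1 + K * T), by linarith only [hKT], ?_⟩
  intro E B hEc hBc hbound hsign t x v X V tb ht hx hX hV hXt hVt htb0 htbt hpos hexit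
  obtain ⟨ht0, htT⟩ := ht
  set τ0 : ℝ := t - tb with hτ0def
  clear_value τ0
  have hτ0nn : 0 ≤ τ0 := by rw [hτ0def]; linarith only [htbt]
  have hτ0t : τ0 < t := by rw [hτ0def]; linarith only [htb0]
  have hτ0le : τ0 ≤ t := hτ0t.le
  have hteq : t = τ0 + tb := by rw [hτ0def]; ring
  have hxpos : 0 < x 2 := hx
  set F : ℝ → V3 := fun τ => lorentz E B Ee Be g τ (X τ) (V τ) with hFdef
  have hVi : ∀ (i : Fin 3) (τ : ℝ), HasDerivAt (fun s => V s i) (F τ i) τ :=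
    fun i τ => hasDerivAt_pi.mp (hV τ) i
  clear_value F
  have hX3 : ∀ τ : ℝ, HasDerivAt (fun s => X s 2) (vhat (V τ) 2) τ :=
    fun τ => hasDerivAt_pi.mp (hX τ) 2
  have hVc : ∀ i : Fin 3, Continuous fun τ => V τ i :=
    fun i => Differentiable.continuous (fun τ => (hVi i τ).differentiableAt)
  have hjapc : Continuous fun τ => jap (V τ) := by
    have h1 : Continuous fun τ => 1 + dot3 (V τ) (V τ) := by
      unfold dot3
      exact continuous_const.add
        ((((hVc 0).mul (hVc 0)).add ((hVc 1).mul (hVc 1))).add ((hVc 2).mul (hVc 2)))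
    exact Real.continuous_sqrt.comp h1
  have hintc : Continuous fun τ => vhat (V τ) 2 := by
    have heq : (fun τ => vhat (V τ) 2) = fun τ => V τ 2 / jap (V τ) :=
      funext fun τ => vhat_apply (V τ) 2
    rw [heq]
    exact (hVc 2).div hjapc fun τ => (jap_pos _).ne'
  have hXge : ∀ τ ∈ Icc τ0 t, 0 ≤ X τ 2 := by
    intro τ hτ
    rcases eq_or_lt_of_le hτ.1 with h | h
    · rw [← h, hexit]
    · rcases eq_or_lt_of_le hτ.2 with h2 | h2
      · rw [h2, hXt]; exact hxpos.le
      · exact (hpos τ ⟨h, h2⟩).le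
  have hdom : ∀ τ ∈ Icc τ0 t, (τ, X τ) ∈ stDomCl T := by
    intro τ hτ
    exact Set.mem_prod.mpr ⟨⟨le_trans hτ0nn hτ.1, le_trans hτ.2 htT.le⟩,
      mem_closure_halfSpace (hXge τ hτ)⟩
  have hEB : ∀ τ ∈ Icc τ0 t, (∀ i, |E (τ, X τ) i| ≤ |M|) ∧ (∀ i, |B (τ, X τ) i| ≤ |M|) := by
    intro τ hτ
    have hb := hbound (τ, X τ) (hdom τ hτ)
    have n1 := enorm3_nonneg (E (τ, X τ))
    have n2 := enorm3_nonneg (B (τ, X τ))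
    have n3 := norm_nonneg (fderiv ℝ E (τ, X τ))
    have n4 := norm_nonneg (fderiv ℝ B (τ, X τ))
    have h1 : enorm3 (E (τ, X τ)) ≤ M := by linarith only [hb, n2, n3, n4]
    have h2 : enorm3 (B (τ, X τ)) ≤ M := by linarith only [hb, n1, n3, n4]
    exact ⟨fun i => (abs_comp_le_enorm3 _ i).trans (h1.trans (le_abs_self M)),
           fun i => (abs_comp_le_enorm3 _ i).trans (h2.trans (le_abs_self M))⟩
  have hFb : ∀ τ ∈ Icc τ0 t, ∀ i : Fin 3, |F τ i| ≤ K1 := by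
    intro τ hτ i
    obtain ⟨hE', hB'⟩ := hEB τ hτ
    have habs1 : ∀ j k : Fin 3, |vhat (V τ) j * B (τ, X τ) k| ≤ |M| := by
      intro j k
      rw [abs_mul]
      calc |vhat (V τ) j| * |B (τ, X τ) k| ≤ 1 * |B (τ, X τ) k| :=
            mul_le_mul_of_nonneg_right (abs_vhat_le_one (V τ) j) (abs_nonneg _)
        _ = |B (τ, X τ) k| := one_mul _
        _ ≤ |M| := hB' k
    have habs2 : ∀ j k : Fin 3, |vhat (V τ) j * (B (τ, X τ) k + Be)| ≤ |M| + |Be| := by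
      intro j k
      rw [abs_mul]
      calc |vhat (V τ) j| * |B (τ, X τ) k + Be| ≤ 1 * |B (τ, X τ) k + Be| :=
            mul_le_mul_of_nonneg_right (abs_vhat_le_one (V τ) j) (abs_nonneg _)
        _ = |B (τ, X τ) k + Be| := one_mul _
        _ ≤ |B (τ, X τ) k| + |Be| := abs_add_le _ _
        _ ≤ |M| + |Be| := by linarith only [hB' k]
    have h3 : i = 0 ∨ i = 1 ∨ i = 2 := by fin_cases i <;> simp
    rcases h3 with rfl | rfl | rfl
    · have hcomp : F τ 0 = E (τ, X τ) 0
          + (vhat (V τ) 1 * (B (τ, X τ) 2 + Be) - vhat (V τ) 2 * B (τ, X τ) 1) := by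
        simp [hFdef, lorentz, cross3, e3v, Matrix.vecHead, Matrix.vecTail]
      rw [hcomp, hK1def, abs_le]
      have e1 := abs_le.mp (hE' 0)
      have e2 := abs_le.mp (habs2 1 2)
      have e3 := abs_le.mp (habs1 2 1)
      constructor <;>
        linarith only [e1.1, e1.2, e2.1, e2.2, e3.1, e3.2, abs_nonneg M,
          abs_nonneg Ee, abs_nonneg Be, hg]
    · have hcomp : F τ 1 = E (τ, X τ) 1
          + (vhat (V τ) 2 * B (τ, X τ) 0 - vhat (V τ) 0 * (B (τ, X τ) 2 + Be)) := by
        simp [hFdef, lorentz, cross3, e3v, Matrix.vecHead, Matrix.vecTail]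
      rw [hcomp, hK1def, abs_le]
      have e1 := abs_le.mp (hE' 1)
      have e2 := abs_le.mp (habs1 2 0)
      have e3 := abs_le.mp (habs2 0 2)
      constructor <;>
        linarith only [e1.1, e1.2, e2.1, e2.2, e3.1, e3.2, abs_nonneg M,
          abs_nonneg Ee, abs_nonneg Be, hg]
    · have hcomp : F τ 2 = E (τ, X τ) 2 + Ee
          + (vhat (V τ) 0 * B (τ, X τ) 1 - vhat (V τ) 1 * B (τ, X τ) 0) - g := by
        simp [hFdef, lorentz, cross3, e3v, Matrix.vecHead, Matrix.vecTail]
      rw [hcomp, hK1def, abs_le]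
      have e1 := abs_le.mp (hE' 2)
      have e2 := abs_le.mp (habs1 0 1)
      have e3 := abs_le.mp (habs1 1 0)
      constructor <;>
        linarith only [e1.1, e1.2, e2.1, e2.2, e3.1, e3.2, abs_nonneg M,
          abs_nonneg Ee, abs_nonneg Be, hg, le_abs_self Ee, neg_abs_le Ee]
  have hsign' : ∀ τ ∈ Icc τ0 t, F τ 2 ≤ -c0 := by
    intro τ hτ
    have hs := hsign τ ⟨le_trans hτ0nn hτ.1, le_trans hτ.2 htT.le⟩ (X τ)
      (mem_closure_halfSpace (hXge τ hτ)) (V τ)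
    have hcomp : F τ 2 = E (τ, X τ) 2 + Ee
        + (vhat (V τ) 0 * B (τ, X τ) 1 - vhat (V τ) 1 * B (τ, X τ) 0) - g := by
      simp [hFdef, lorentz, cross3, e3v, Matrix.vecHead, Matrix.vecTail]
    have hcr : cross3 (vhat (V τ)) (B (τ, X τ)) 2
        = vhat (V τ) 0 * B (τ, X τ) 1 - vhat (V τ) 1 * B (τ, X τ) 0 := by
      simp [cross3, Matrix.vecHead, Matrix.vecTail]
    rw [hcr] at hs
    rw [hcomp]
    linarith only [hs]
  set a : ℝ := V τ0 2 with hadef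
  clear_value a
  set γ0 : ℝ := jap (V τ0) with hγ0def
  clear_value γ0
  have hγ1 : 1 ≤ γ0 := by rw [hγ0def]; exact one_le_jap _
  have hγpos : 0 < γ0 := lt_of_lt_of_le one_pos hγ1
  have hfd : ∀ τ : ℝ, HasDerivAt (fun s => V s 2 + c0 * s) (F τ 2 + c0) τ := by
    intro τ
    have h2 := (hVi 2 τ).fun_add ((hasDerivAt_id τ).const_mul c0)
    simpa using h2
  have hanti : AntitoneOn (fun s => V s 2 + c0 * s) (Icc τ0 t) := by
    apply antitoneOn_of_deriv_nonpos (convex_Icc _ _)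
    · exact ((hVc 2).add (continuous_const.mul continuous_id)).continuousOn
    · intro τ _; exact (hfd τ).differentiableAt.differentiableWithinAt
    · intro τ hτ
      rw [interior_Icc] at hτ
      rw [(hfd τ).deriv]
      linarith only [hsign' τ (Ioo_subset_Icc_self hτ), hc0]
  have hV3le : ∀ τ ∈ Icc τ0 t, V τ 2 ≤ a - c0 * (τ - τ0) := by
    intro τ hτ
    have h := hanti (left_mem_Icc.mpr hτ0le) hτ hτ.1
    simp only at h
    have ha2 : a = V τ0 2 := hadef
    linarith only [h, ha2]
  have hvh0 : 0 ≤ vhat (V τ0) 2 := by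
    have hd := hX3 τ0
    have hsl := hasDerivAt_iff_tendsto_slope.mp hd
    have hmono : 𝓝[>] τ0 ≤ 𝓝[≠] τ0 :=
      nhdsWithin_mono _ fun y hy => Set.mem_compl_singleton_iff.mpr (ne_of_gt hy)
    have h2 := hsl.mono_left hmono
    have hev : ∀ᶠ y in 𝓝[>] τ0, 0 ≤ slope (fun s => X s 2) τ0 y := by
      filter_upwards [Ioo_mem_nhdsGT_of_mem (⟨le_rfl, hτ0t⟩ : τ0 ∈ Ico τ0 t)] with y hy
      rw [slope_def_field]
      apply div_nonneg
      · simp only [hexit]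
        simpa using (hpos y hy).le
      · linarith only [hy.1]
    exact ge_of_tendsto h2 hev
  have ha : 0 ≤ a := by
    rw [vhat_apply] at hvh0
    rcases div_nonneg_iff.mp hvh0 with ⟨h, _⟩ | ⟨_, h⟩
    · rw [hadef]; exact h
    · linarith only [jap_pos (V τ0), h]
  set S : ℝ → ℝ := fun τ => V τ 0 * F τ 0 + V τ 1 * F τ 1 + V τ 2 * F τ 2 with hSdef
  clear_value S
  have hjd : ∀ τ : ℝ, HasDerivAt (fun s => jap (V s)) (S τ / jap (V τ)) τ := by
    intro τ
    have h0 := (hVi 0 τ).fun_mul (hVi 0 τ)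
    have h1 := (hVi 1 τ).fun_mul (hVi 1 τ)
    have h2 := (hVi 2 τ).fun_mul (hVi 2 τ)
    have hsum := (hasDerivAt_const τ (1:ℝ)).fun_add ((h0.fun_add h1).fun_add h2)
    have hQ : HasDerivAt (fun s => 1 + dot3 (V s) (V s)) (2 * S τ) τ := by
      refine hsum.congr_deriv ?_
      rw [hSdef]; ring
    have hdpos : 0 < 1 + dot3 (V τ) (V τ) := by linarith only [dot3_self_nonneg (V τ)]
    have hs := (Real.hasDerivAt_sqrt hdpos.ne').comp τ hQ
    have hjne : jap (V τ) ≠ 0 := (jap_pos _).ne'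
    have heq : S τ / jap (V τ)
        = 1 / (2 * Real.sqrt (1 + dot3 (V τ) (V τ))) * (2 * S τ) := by
      rw [show Real.sqrt (1 + dot3 (V τ) (V τ)) = jap (V τ) from rfl]
      field_simp
    rw [heq]
    exact hs
  have hDb : ∀ τ ∈ Icc τ0 t, |S τ / jap (V τ)| ≤ K := by
    intro τ hτ
    have hj := jap_pos (V τ)
    rw [abs_div, abs_of_pos hj, div_le_iff₀ hj, hKdef]
    have hjnn : 0 ≤ jap (V τ) := hj.le
    have b0 : |V τ 0 * F τ 0| ≤ jap (V τ) * K1 := by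
      rw [abs_mul]
      exact mul_le_mul (abs_comp_le_jap _ 0) (hFb τ hτ 0) (abs_nonneg _) hjnn
    have b1 : |V τ 1 * F τ 1| ≤ jap (V τ) * K1 := by
      rw [abs_mul]
      exact mul_le_mul (abs_comp_le_jap _ 1) (hFb τ hτ 1) (abs_nonneg _) hjnn
    have b2 : |V τ 2 * F τ 2| ≤ jap (V τ) * K1 := by
      rw [abs_mul]
      exact mul_le_mul (abs_comp_le_jap _ 2) (hFb τ hτ 2) (abs_nonneg _) hjnn
    have htri : |S τ| ≤ |V τ 0 * F τ 0| + |V τ 1 * F τ 1| + |V τ 2 * F τ 2| := by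
      rw [hSdef]
      exact (abs_add_le _ _).trans (add_le_add_left (abs_add_le _ _) _)
    linarith only [b0, b1, b2, htri]
  have hjvar : ∀ τ ∈ Icc τ0 t, |jap (V τ) - γ0| ≤ K * T := by
    intro τ hτ
    have h := Convex.norm_image_sub_le_of_norm_hasDerivWithin_le
      (f := fun s => jap (V s)) (f' := fun s => S s / jap (V s)) (s := Icc τ0 t) (C := K)
      (fun y _ => (hjd y).hasDerivWithinAt)
      (fun y hy => by rw [Real.norm_eq_abs]; exact hDb y hy)
      (convex_Icc _ _) (left_mem_Icc.mpr hτ0le) hτ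
    rw [Real.norm_eq_abs, Real.norm_eq_abs] at h
    have habs : |τ - τ0| ≤ T := by
      rw [abs_of_nonneg (by linarith only [hτ.1])]
      linarith only [hτ.2, htT, hτ0nn]
    calc |jap (V τ) - γ0| ≤ K * |τ - τ0| := by rw [hγ0def]; exact h
      _ ≤ K * T := mul_le_mul_of_nonneg_left habs hK.le
  have hub : ∀ τ ∈ Icc τ0 t, jap (V τ) ≤ γ0 + K * T := by
    intro τ hτ
    linarith only [(abs_le.mp (hjvar τ hτ)).2]
  have hlb : ∀ τ ∈ Icc τ0 t, γ0 ≤ jap (V τ) * (1 + K * T) := by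
    intro τ hτ
    have h1 := (abs_le.mp (hjvar τ hτ)).1
    have h2 := one_le_jap (V τ)
    linarith only [h1, h2, mul_nonneg (sub_nonneg.mpr h2) hKT]
  set P : ℝ := sSup ((fun s => jap (V s)) '' Icc τ0 t) with hPdef
  clear_value P
  have hmemt : t ∈ Icc τ0 t := right_mem_Icc.mpr hτ0le
  have hmem0 : τ0 ∈ Icc τ0 t := left_mem_Icc.mpr hτ0le
  have hbdd : BddAbove ((fun s => jap (V s)) '' Icc τ0 t) := by
    refine ⟨γ0 + K * T, ?_⟩
    rintro y ⟨τ, hτ, rfl⟩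
    exact hub τ hτ
  have hPge : ∀ τ ∈ Icc τ0 t, jap (V τ) ≤ P := fun τ hτ => by
    rw [hPdef]; exact le_csSup hbdd ⟨τ, hτ, rfl⟩
  have hP1 : 1 ≤ P := le_trans (one_le_jap (V t)) (hPge t hmemt)
  have hPpos : 0 < P := lt_of_lt_of_le one_pos hP1
  have hγ0P : γ0 ≤ P := by
    have h := hPge τ0 hmem0
    rw [hγ0def]; exact h
  have hγP : γ0 ≤ (1 + K * T) * P := by
    calc γ0 ≤ P := hγ0P
      _ = 1 * P := (one_mul P).symm
      _ ≤ (1 + K * T) * P :=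
        mul_le_mul_of_nonneg_right (by linarith only [hKT]) hPpos.le
  rcases le_or_gt tb (2 * (a / c0)) with hcase | hcase
  · have heq : 2 * (1 + K * T) / c0 * P * (a / γ0)
        = 2 * (1 + K * T) * P * a / (c0 * γ0) := by
      field_simp
    rw [heq, le_div_iff₀ (by positivity)]
    have htbc0 : tb * c0 ≤ 2 * a := by
      have h := mul_le_mul_of_nonneg_right hcase hc0.le
      calc tb * c0 ≤ 2 * (a / c0) * c0 := h
        _ = 2 * a := by field_simp
    linarith only [mul_le_mul_of_nonneg_right htbc0 hγpos.le,
      mul_le_mul_of_nonneg_left hγP (by linarith only [ha] : (0:ℝ) ≤ 2 * a)]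
  · set σ : ℝ := τ0 + a / c0 with hσdef
    clear_value σ
    have hs0 : 0 ≤ a / c0 := div_nonneg ha hc0.le
    have hτ0σ : τ0 ≤ σ := by rw [hσdef]; linarith only [hs0]
    have hσt : σ ≤ t := by
      rw [hσdef, hteq]
      linarith only [hcase, hs0]
    have hsub1 : Icc τ0 σ ⊆ Icc τ0 t := Icc_subset_Icc le_rfl hσt
    have hsub2 : Icc σ t ⊆ Icc τ0 t := Icc_subset_Icc hτ0σ le_rfl
    set L : ℝ → ℝ := fun τ => a - c0 * (τ - τ0) with hLdef
    clear_value L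
    have hLc : Continuous L := by
      rw [hLdef]
      exact continuous_const.sub (continuous_const.mul (continuous_id.sub continuous_const))
    have hint1 : IntervalIntegrable (fun τ => vhat (V τ) 2) volume τ0 σ :=
      hintc.intervalIntegrable _ _
    have hint2 : IntervalIntegrable (fun τ => vhat (V τ) 2) volume σ t :=
      hintc.intervalIntegrable _ _
    have hLint : ∀ α β : ℝ, ∫ τ in α..β, L τ
        = a * (β - α) - c0 * ((β ^ 2 - α ^ 2) / 2 - τ0 * (β - α)) := by
      intro α β
      have hfun : (fun τ => L τ) = fun τ => (a + c0 * τ0) - c0 * τ := by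
        funext τ; rw [hLdef]; ring
      rw [hfun, intervalIntegral.integral_sub intervalIntegrable_const
        ((continuous_mul_left c0).intervalIntegrable _ _),
        intervalIntegral.integral_const_mul, integral_id, intervalIntegral.integral_const]
      simp only [smul_eq_mul]
      ring
    have hptw1 : ∀ τ ∈ Icc τ0 σ, vhat (V τ) 2 ≤ (1 + K * T) / γ0 * L τ := by
      intro τ hτ
      have hτ' := hsub1 hτ
      have hjp := jap_pos (V τ)
      have hLnn : 0 ≤ L τ := by
        simp only [hLdef]
        have h2 := hτ.2
        rw [hσdef] at h2
        have hmul := mul_le_mul_of_nonneg_left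
          (show τ - τ0 ≤ a / c0 by linarith only [h2]) hc0.le
        have hca : c0 * (a / c0) = a := by field_simp
        linarith only [hmul, hca]
      have hVle := hV3le τ hτ'
      have hlbτ := hlb τ hτ'
      rw [vhat_apply]
      rcases le_or_gt (V τ 2) 0 with hneg | hposv
      · have h1 : V τ 2 / jap (V τ) ≤ 0 := div_nonpos_iff.mpr (Or.inr ⟨hneg, hjp.le⟩)
        have h2 : 0 ≤ (1 + K * T) / γ0 * L τ :=
          mul_nonneg (div_nonneg (by linarith only [hKT]) hγpos.le) hLnn
        linarith only [h1, h2]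
      · have h1 : V τ 2 / jap (V τ) ≤ L τ / jap (V τ) := by
          apply (div_le_div_iff_of_pos_right hjp).mpr
          simp only [hLdef]; exact hVle
        have h2 : L τ / jap (V τ) ≤ (1 + K * T) / γ0 * L τ := by
          rw [show (1 + K * T) / γ0 * L τ = (1 + K * T) * L τ / γ0 from by ring,
            div_le_div_iff₀ hjp hγpos]
          linarith only [mul_le_mul_of_nonneg_left hlbτ hLnn]
        linarith only [h1, h2]
    have hptw2 : ∀ τ ∈ Icc σ t, vhat (V τ) 2 ≤ L τ / P := by
      intro τ hτ
      have hτ' := hsub2 hτ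
      have hjp := jap_pos (V τ)
      have hLle : L τ ≤ 0 := by
        simp only [hLdef]
        have h2 := hτ.1
        rw [hσdef] at h2
        have hmul := mul_le_mul_of_nonneg_left
          (show a / c0 ≤ τ - τ0 by linarith only [h2]) hc0.le
        have hca : c0 * (a / c0) = a := by field_simp
        linarith only [hmul, hca]
      have hVle := hV3le τ hτ'
      have hjP := hPge τ hτ'
      have h1 : V τ 2 / jap (V τ) ≤ L τ / jap (V τ) := by
        apply (div_le_div_iff_of_pos_right hjp).mpr
        simp only [hLdef]; exact hVle
      have h2 : L τ / jap (V τ) ≤ L τ / P := by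
        rw [div_le_div_iff₀ hjp hPpos]
        linarith only [mul_nonneg (neg_nonneg.mpr hLle) (sub_nonneg.mpr hjP)]
      rw [vhat_apply]
      linarith only [h1, h2]
    have hmono1 : ∫ τ in τ0..σ, vhat (V τ) 2 ≤ ∫ τ in τ0..σ, (1 + K * T) / γ0 * L τ :=
      intervalIntegral.integral_mono_on hτ0σ hint1
        ((continuous_const.mul hLc).intervalIntegrable _ _) hptw1
    have hmono2 : ∫ τ in σ..t, vhat (V τ) 2 ≤ ∫ τ in σ..t, L τ / P :=
      intervalIntegral.integral_mono_on hσt hint2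
        ((hLc.div_const _).intervalIntegrable _ _) hptw2
    have hI1 : ∫ τ in τ0..σ, (1 + K * T) / γ0 * L τ
        = (1 + K * T) / γ0 * (a ^ 2 / (2 * c0)) := by
      rw [intervalIntegral.integral_const_mul, hLint, hσdef]
      field_simp
      ring
    have hI2 : ∫ τ in σ..t, L τ / P = -(c0 * (tb - a / c0) ^ 2 / 2) / P := by
      simp only [div_eq_inv_mul]
      rw [intervalIntegral.integral_const_mul, hLint, hσdef, hteq]
      field_simp
      ring
    have htotal : 0 < (1 + K * T) / γ0 * (a ^ 2 / (2 * c0))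
        + -(c0 * (tb - a / c0) ^ 2 / 2) / P := by
      have hsum : (∫ τ in τ0..σ, vhat (V τ) 2) + ∫ τ in σ..t, vhat (V τ) 2
          = ∫ τ in τ0..t, vhat (V τ) 2 :=
        intervalIntegral.integral_add_adjacent_intervals hint1 hint2
      have hFTC : ∫ τ in τ0..t, vhat (V τ) 2 = X t 2 - X τ0 2 :=
        intervalIntegral.integral_eq_sub_of_hasDerivAt (fun τ _ => hX3 τ)
          (hintc.intervalIntegrable _ _)
      have hx2 : 0 < X t 2 - X τ0 2 := by
        rw [hXt, hexit]
        simpa using hxpos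
      calc (0:ℝ) < X t 2 - X τ0 2 := hx2
        _ = ∫ τ in τ0..t, vhat (V τ) 2 := hFTC.symm
        _ = (∫ τ in τ0..σ, vhat (V τ) 2) + ∫ τ in σ..t, vhat (V τ) 2 := hsum.symm
        _ ≤ (1 + K * T) / γ0 * (a ^ 2 / (2 * c0))
            + -(c0 * (tb - a / c0) ^ 2 / 2) / P :=
          add_le_add (hmono1.trans_eq hI1) (hmono2.trans_eq hI2)
    have key3' : (tb - a / c0) ^ 2 * (c0 ^ 2 * γ0) < (1 + K * T) * P * a ^ 2 := by
      have hneg : -(c0 * (tb - a / c0) ^ 2 / 2) / P = -(c0 * (tb - a / c0) ^ 2 / 2 / P) := by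
        ring
      have h1 : c0 * (tb - a / c0) ^ 2 / 2 / P
          < (1 + K * T) / γ0 * (a ^ 2 / (2 * c0)) := by
        linarith only [htotal, hneg.symm.le, hneg.le]
      rw [div_lt_iff₀ hPpos] at h1
      have h2 : (1 + K * T) / γ0 * (a ^ 2 / (2 * c0)) * P
          = (1 + K * T) * P * a ^ 2 / (2 * c0 * γ0) := by
        field_simp
      rw [h2, lt_div_iff₀ (by positivity)] at h1
      calc (tb - a / c0) ^ 2 * (c0 ^ 2 * γ0)
          = c0 * (tb - a / c0) ^ 2 / 2 * (2 * c0 * γ0) := by ring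
        _ < (1 + K * T) * P * a ^ 2 := h1
    set R : ℝ := (1 + K * T) * P / γ0 with hRdef
    clear_value R
    have hR1 : 1 ≤ R := by
      rw [hRdef, le_div_iff₀ hγpos]
      linarith only [hγP]
    have key3 : (tb - a / c0) ^ 2 < R * (a / c0) ^ 2 := by
      rw [hRdef, show (1 + K * T) * P / γ0 * (a / c0) ^ 2
        = (1 + K * T) * P * a ^ 2 / (γ0 * c0 ^ 2) from by field_simp,
        lt_div_iff₀ (by positivity)]
      calc (tb - a / c0) ^ 2 * (γ0 * c0 ^ 2)
          = (tb - a / c0) ^ 2 * (c0 ^ 2 * γ0) := by ring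
        _ < (1 + K * T) * P * a ^ 2 := key3'
    have hd0 : 0 ≤ tb - a / c0 := by linarith only [hcase, hs0]
    have hRnn : 0 ≤ R := by linarith only [hR1]
    have hRs0 : 0 ≤ R * (a / c0) := mul_nonneg hRnn hs0
    have hsq : (tb - a / c0) ^ 2 < (R * (a / c0)) ^ 2 := by
      have hfac : 0 ≤ R * (R - 1) * (a / c0) ^ 2 :=
        mul_nonneg (mul_nonneg hRnn (by linarith only [hR1])) (sq_nonneg _)
      nlinarith only [key3, hfac]
    have htbs : tb - a / c0 ≤ R * (a / c0) := by
      by_contra hcon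
      push_neg at hcon
      have h2 : (R * (a / c0)) ^ 2 ≤ (tb - a / c0) ^ 2 :=
        pow_le_pow_left₀ hRs0 hcon.le 2
      linarith only [hsq, h2]
    have hs0R : a / c0 ≤ R * (a / c0) := le_mul_of_one_le_left hs0 hR1
    have hRHS : 2 * (1 + K * T) / c0 * P * (a / γ0) = 2 * (R * (a / c0)) := by
      rw [hRdef]
      field_simp
    rw [hRHS]
    linarith only [htbs, hs0R]
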